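/- For every permutation π of {1,2,…,n}, the block-interchange distance of π satisfies bid(π) ≥ (n + 1 − c(overline(π))) / 2, where c(overline(π)) is the number of cycles (including fixed points) of the permutation overline(π) of {0,1,…,n}. -/

import Mathlib

/-- The (n+1)-cycle (0,1,2,…,n) on {0,1,…,n} = `Fin (n+1)`, mapping x to x+1 (mod n+1). -/
def rho (n : ℕ) : Equiv.Perm (Fin (n + 1)) :=
  finRotate (n + 1)

/-- For a permutation `π` of {0,1,…,n} fixing 0 (the extension of a permutation of {1,…,n}),
`ob n π` is `overline(π) = ρ ∘ β_π`, where `β_π = π ∘ ρ⁻¹ ∘ π⁻¹` is precisely the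
(n+1)-cycle (0, π_n, π_{n−1}, …, π_1): it sends 0 ↦ π_n, π_i ↦ π_{i−1} (2 ≤ i ≤ n),
and π_1 ↦ 0. -/
def ob (n : ℕ) (π : Equiv.Perm (Fin (n + 1))) : Equiv.Perm (Fin (n + 1)) :=
  rho n * (π * (rho n)⁻¹ * π⁻¹)

/-- `IsBlockInterchange n i j k l β` says that `β` (a permutation of {0,1,…,n} fixing 0,
representing a permutation of {1,…,n}) is the block-interchange β(i,j,k,l) with
1 ≤ i < j ≤ k < l ≤ n+1, i.e. its one-line notation on positions 1,…,n is
⟨1,…,i−1, k,…,l−1, j,…,k−1, i,…,j−1, l,…,n⟩. -/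
def IsBlockInterchange (n i j k l : ℕ) (β : Equiv.Perm (Fin (n + 1))) : Prop :=
  1 ≤ i ∧ i < j ∧ j ≤ k ∧ k < l ∧ l ≤ n + 1 ∧
  (∀ p : Fin (n + 1), (p : ℕ) < i → β p = p) ∧
  (∀ p : Fin (n + 1), i ≤ (p : ℕ) → (p : ℕ) < i + (l - k) →
      (β p : ℕ) = k + ((p : ℕ) - i)) ∧
  (∀ p : Fin (n + 1), i + (l - k) ≤ (p : ℕ) → (p : ℕ) < i + (l - k) + (k - j) →
      (β p : ℕ) = j + ((p : ℕ) - (i + (l - k)))) ∧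
  (∀ p : Fin (n + 1), i + (l - k) + (k - j) ≤ (p : ℕ) → (p : ℕ) < l →
      (β p : ℕ) = i + ((p : ℕ) - (i + (l - k) + (k - j)))) ∧
  (∀ p : Fin (n + 1), l ≤ (p : ℕ) → β p = p)

/-- The number of fixed points c₁(σ) of a permutation σ. -/
def fixedPointCount {m : ℕ} (σ : Equiv.Perm (Fin m)) : ℕ :=
  (Finset.univ.filter fun x => σ x = x).card

/-- The number of cycles c(σ) of a permutation σ, counting fixed points as 1-cycles
(`Equiv.Perm.cycleType` lists the lengths of the cycles of length ≥ 2). -/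
def cycleCount {m : ℕ} (σ : Equiv.Perm (Fin m)) : ℕ :=
  σ.cycleType.card + fixedPointCount σ

/-- The number of odd-length cycles c_odd(σ) of a permutation σ, counting fixed points
as (odd) 1-cycles. -/
def oddCycleCount {m : ℕ} (σ : Equiv.Perm (Fin m)) : ℕ :=
  (σ.cycleType.filter fun k => Odd k).card + fixedPointCount σ

/-- `β` is a block-interchange β(i,j,k,l) for some 1 ≤ i < j ≤ k < l ≤ n+1. -/
def IsBlockInterchangePerm (n : ℕ) (β : Equiv.Perm (Fin (n + 1))) : Prop :=
  ∃ i j k l : ℕ, IsBlockInterchange n i j k l β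

/-- The block-interchange distance: the least t such that π is a product of t
block-interchanges. -/
noncomputable def bid (n : ℕ) (π : Equiv.Perm (Fin (n + 1))) : ℕ :=
  sInf {t | ∃ L : List (Equiv.Perm (Fin (n + 1))), L.length = t ∧
    (∀ g ∈ L, IsBlockInterchangePerm n g) ∧ L.prod = π}

open Equiv Equiv.Perm

variable {m : ℕ}

/-- The fixed subspace of a permutation acting on `Fin m → ℚ`. -/
def fixSpace (σ : Equiv.Perm (Fin m)) : Submodule ℚ (Fin m → ℚ) where
  carrier := {v | ∀ x, v (σ x) = v x}
  add_mem' := by intro a b ha hb x; simp only [Pi.add_apply, ha x, hb x]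
  zero_mem' := by intro x; rfl
  smul_mem' := by intro c v hv x; simp only [Pi.smul_apply, hv x]

lemma fix_zpow (σ : Equiv.Perm (Fin m)) {v : Fin m → ℚ} (hv : ∀ x, v (σ x) = v x) :
    ∀ (i : ℤ) (x : Fin m), v ((σ ^ i) x) = v x := by
  intro i
  induction i using Int.induction_on with
  | zero => simp
  | succ k ih =>
      intro x
      have : (σ ^ ((k : ℤ) + 1)) x = (σ ^ (k : ℤ)) (σ x) := by
        rw [zpow_add_one, Equiv.Perm.mul_apply]
      rw [this, ih, hv]
  | pred k ih =>
      intro x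
      have h1 : (σ ^ (-(k : ℤ) - 1)) x = (σ ^ (-(k : ℤ))) (σ⁻¹ x) := by
        rw [zpow_sub_one, Equiv.Perm.mul_apply]
      have h2 : v (σ⁻¹ x) = v x := by
        have := hv (σ⁻¹ x); rw [show σ (σ⁻¹ x) = x from σ.apply_symm_apply x] at this; exact this.symm
      rw [h1, ih, h2]

lemma fix_sameCycle (σ : Equiv.Perm (Fin m)) {v : Fin m → ℚ} (hv : ∀ x, v (σ x) = v x)
    {x y : Fin m} (h : σ.SameCycle x y) : v x = v y := by
  obtain ⟨i, hi⟩ := h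
  rw [← hi, fix_zpow σ hv]

attribute [local instance] Classical.propDecidable

noncomputable instance (σ : Equiv.Perm (Fin m)) :
    Fintype (Quotient (Equiv.Perm.SameCycle.setoid σ)) := Quotient.fintype _

/-- The fixed space is linearly equivalent to functions on the set of cycles. -/
noncomputable def fixEquiv (σ : Equiv.Perm (Fin m)) :
    fixSpace σ ≃ₗ[ℚ] (Quotient (Equiv.Perm.SameCycle.setoid σ) → ℚ) where
  toFun v := Quotient.lift (v : Fin m → ℚ) (fun a b h => fix_sameCycle σ v.2 h)
  map_add' u v := funext fun q => Quotient.inductionOn q fun _ => rfl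
  map_smul' c v := funext fun q => Quotient.inductionOn q fun _ => rfl
  invFun f := ⟨fun x => f ⟦x⟧, fun x => congrArg f (Quotient.sound (⟨-1, by simp⟩ :
      Equiv.Perm.SameCycle σ (σ x) x))⟩
  left_inv v := Subtype.ext rfl
  right_inv f := funext fun q => Quotient.inductionOn q fun _ => rfl

lemma card_quot (σ : Equiv.Perm (Fin m)) :
    Fintype.card (Quotient (Equiv.Perm.SameCycle.setoid σ)) = cycleCount σ := by
  classical
  have wd : ∀ a b : Fin m, Equiv.Perm.SameCycle σ a b → σ a = a → b = a := by
    rintro a b ⟨z, hz⟩ ha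
    rw [← hz, Equiv.Perm.zpow_apply_eq_self_of_apply_eq_self ha]
  set P : Quotient (Equiv.Perm.SameCycle.setoid σ) → Prop :=
    Quotient.lift (fun x => σ x = x) (by
      intro a b hab
      have hab' : σ.SameCycle a b := hab
      apply propext
      constructor
      · intro h; have h2 := wd a b hab' h; show σ b = b; rw [h2, h]
      · intro h; have h2 := wd b a hab'.symm h; show σ a = a; rw [h2, h]) with hPdef
  have e1 : {x : Fin m // σ x = x} ≃ {q // P q} := by
    refine Equiv.ofBijective (fun x => ⟨⟦x.1⟧, x.2⟩) ⟨?_, ?_⟩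
    · rintro ⟨x, hx⟩ ⟨y, hy⟩ h
      simp only [Subtype.mk.injEq] at h ⊢
      exact (wd x y (Quotient.exact (congrArg Subtype.val h : (⟦x⟧ : Quotient (Equiv.Perm.SameCycle.setoid σ)) = ⟦y⟧)) hx).symm
    · rintro ⟨q, hq⟩
      obtain ⟨x, rfl⟩ := Quotient.exists_rep q
      exact ⟨⟨x, hq⟩, rfl⟩
  have e2 : {q // ¬ P q} ≃ {c // c ∈ σ.cycleFactorsFinset} := by
    have wd2 : ∀ a b : Fin m, Equiv.Perm.SameCycle σ a b → σ.cycleOf a = σ.cycleOf b :=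
      fun a b h => h.cycleOf_eq
    set F : Quotient (Equiv.Perm.SameCycle.setoid σ) → Equiv.Perm (Fin m) :=
      Quotient.lift σ.cycleOf wd2 with hF
    have hmem : ∀ q, ¬ P q → F q ∈ σ.cycleFactorsFinset := by
      intro q
      induction q using Quotient.inductionOn with
      | h x =>
        intro hx
        exact Equiv.Perm.cycleOf_mem_cycleFactorsFinset_iff.mpr
          (Equiv.Perm.mem_support.mpr hx)
    refine Equiv.ofBijective (fun q => ⟨F q.1, hmem q.1 q.2⟩) ⟨?_, ?_⟩
    · rintro ⟨q1, h1⟩ ⟨q2, h2⟩ h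
      obtain ⟨x, rfl⟩ := Quotient.exists_rep q1
      obtain ⟨y, rfl⟩ := Quotient.exists_rep q2
      simp only [Subtype.mk.injEq] at h ⊢
      have hy' : y ∈ (σ.cycleOf y).support :=
        Equiv.Perm.mem_support_cycleOf_iff.mpr
          ⟨Equiv.Perm.SameCycle.refl σ y, Equiv.Perm.mem_support.mpr h2⟩
      have h' : (F ⟦x⟧ : Equiv.Perm (Fin m)) = σ.cycleOf x := rfl
      have h'' : (F ⟦y⟧ : Equiv.Perm (Fin m)) = σ.cycleOf y := rfl
      rw [h', h''] at h
      rw [← h] at hy'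
      exact Quotient.sound (Equiv.Perm.mem_support_cycleOf_iff.mp hy').1
    · rintro ⟨c, hc⟩
      have hc' := Equiv.Perm.mem_cycleFactorsFinset_iff.mp hc
      obtain ⟨x, hx1, -⟩ := hc'.1
      have hx2 : x ∈ c.support := Equiv.Perm.mem_support.mpr hx1
      have hσx : ¬ σ x = x := by
        have := hc'.2 x hx2
        rw [← this]; exact hx1
      have hcyc : c = σ.cycleOf x := Equiv.Perm.cycle_is_cycleOf hx2 hc
      exact ⟨⟨⟦x⟧, hσx⟩, Subtype.ext hcyc.symm⟩
  have h1 : Fintype.card {q // P q} = fixedPointCount σ := by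
    have he := Fintype.card_eq.mpr ⟨e1⟩
    rw [← he, Fintype.card_subtype]
    rfl
  have h2 : Fintype.card {q // ¬ P q} = σ.cycleType.card := by
    rw [Equiv.Perm.cycleType_def, Multiset.card_map]
    have hv : Multiset.card σ.cycleFactorsFinset.val = σ.cycleFactorsFinset.card := rfl
    rw [hv, ← Fintype.card_coe]
    exact Fintype.card_eq.mpr ⟨e2⟩
  have h3 := Fintype.card_subtype_compl P
  have h4 := Fintype.card_subtype_le P
  unfold cycleCount
  omega

lemma finrank_fixSpace (σ : Equiv.Perm (Fin m)) :
    Module.finrank ℚ (fixSpace σ) = cycleCount σ := by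
  rw [(fixEquiv σ).finrank_eq, Module.finrank_pi, card_quot]

lemma cycleCount_mul_ge (σ τ : Equiv.Perm (Fin m)) :
    cycleCount σ + cycleCount τ ≤ m + cycleCount (σ * τ) := by
  have hsub : fixSpace σ ⊓ fixSpace τ ≤ fixSpace (σ * τ) := by
    rintro v ⟨h1, h2⟩ x
    have : (σ * τ) x = σ (τ x) := rfl
    rw [this, h1 (τ x), h2 x]
  have hkey := Submodule.finrank_sup_add_finrank_inf_eq (fixSpace σ) (fixSpace τ)
  have hmono : Module.finrank ℚ ↥(fixSpace σ ⊓ fixSpace τ) ≤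
      Module.finrank ℚ (fixSpace (σ * τ)) := Submodule.finrank_mono hsub
  have hsup : Module.finrank ℚ ↥(fixSpace σ ⊔ fixSpace τ) ≤
      Module.finrank ℚ (Fin m → ℚ) := Submodule.finrank_le _
  have hpi : Module.finrank ℚ (Fin m → ℚ) = m := by
    rw [Module.finrank_pi, Fintype.card_fin]
  rw [finrank_fixSpace, finrank_fixSpace] at hkey
  rw [finrank_fixSpace] at hmono
  omega

lemma fixedPointCount_add_support (σ : Equiv.Perm (Fin m)) :
    fixedPointCount σ + σ.support.card = m := by
  have hs : σ.support.card = (Finset.univ.filter fun x => ¬ σ x = x).card := rfl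
  unfold fixedPointCount
  rw [hs, Finset.card_filter_add_card_filter_not, Finset.card_univ, Fintype.card_fin]

lemma cycleCount_one : cycleCount (1 : Equiv.Perm (Fin m)) = m := by
  have h := fixedPointCount_add_support (1 : Equiv.Perm (Fin m))
  rw [Equiv.Perm.support_one] at h
  simp only [cycleCount, Equiv.Perm.cycleType_one, Multiset.card_zero]
  simp at h
  omega

lemma cycleCount_swap (a b : Fin m) (h : a ≠ b) :
    m ≤ cycleCount (Equiv.swap a b) + 1 := by
  have h1 : (Equiv.swap a b).cycleType = [2] := by
    rw [Equiv.Perm.IsCycle.cycleType (Equiv.Perm.isCycle_swap h),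
      Equiv.Perm.card_support_swap h]
    rfl
  have h2 := fixedPointCount_add_support (Equiv.swap a b)
  rw [Equiv.Perm.card_support_swap h] at h2
  simp only [cycleCount, h1]
  simp
  omega

lemma cycleCount_swap_le (a b : Fin m) : m ≤ cycleCount (Equiv.swap a b) + 1 := by
  by_cases h : a = b
  · subst h; rw [Equiv.swap_self]
    have : (Equiv.refl (Fin m) : Equiv.Perm (Fin m)) = 1 := rfl
    rw [this, cycleCount_one]; omega
  · exact cycleCount_swap a b h

lemma swap_pair_bound (σ : Equiv.Perm (Fin m)) (a b c d : Fin m) :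
    cycleCount σ ≤ cycleCount (σ * (Equiv.swap a b * Equiv.swap c d)) + 2 := by
  have h1 := cycleCount_mul_ge σ (Equiv.swap a b * Equiv.swap c d)
  have h2 := cycleCount_mul_ge (Equiv.swap a b) (Equiv.swap c d)
  have h3 := cycleCount_swap_le a b
  have h4 := cycleCount_swap_le c d
  omega

lemma swap_val {M : ℕ} (a b x : Fin M) :
    ((Equiv.swap a b) x : ℕ) =
      if (x:ℕ) = (a:ℕ) then (b:ℕ) else if (x:ℕ) = (b:ℕ) then (a:ℕ) else (x:ℕ) := by
  rw [Equiv.swap_apply_def]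
  split_ifs <;> simp_all [Fin.ext_iff]

lemma ob_mul (n : ℕ) (π β : Equiv.Perm (Fin (n + 1))) :
    ob n (π * β) = ob n π * (π * ob n β * π⁻¹) := by
  simp only [ob]
  group

lemma conj_swap_pair (n : ℕ) (π : Equiv.Perm (Fin (n+1))) (a b c d : Fin (n+1)) :
    π * (Equiv.swap a b * Equiv.swap c d) * π⁻¹ =
      Equiv.swap (π a) (π b) * Equiv.swap (π c) (π d) := by
  rw [Equiv.swap_apply_apply, Equiv.swap_apply_apply]
  group

lemma ob_one (n : ℕ) : ob n (1 : Equiv.Perm (Fin (n+1))) = 1 := by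
  simp [ob]

set_option maxHeartbeats 2000000 in
lemma ob_isBlockInterchange {n i j k l : ℕ} {β : Equiv.Perm (Fin (n+1))}
    (h : IsBlockInterchange n i j k l β) :
    ∃ a b c d : Fin (n+1), ob n β = Equiv.swap a b * Equiv.swap c d := by
  obtain ⟨h1i, hij, hjk, hkl, hln, hA, hB, hC, hD, hE⟩ := h
  have hi : i < n + 1 := by omega
  have hj : j < n + 1 := by omega
  have hk : k < n + 1 := by omega
  obtain ⟨l', hl'lt, hl'c⟩ : ∃ l' : ℕ, l' < n + 1 ∧ ((l ≤ n ∧ l' = l) ∨ (l = n + 1 ∧ l' = 0)) := by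
    rcases Nat.lt_or_ge l (n+1) with hc | hc
    · exact ⟨l, by omega, Or.inl ⟨by omega, rfl⟩⟩
    · exact ⟨0, by omega, Or.inr ⟨by omega, rfl⟩⟩
  set I : Fin (n+1) := ⟨i, hi⟩ with hIdef
  set J : Fin (n+1) := ⟨j, hj⟩ with hJdef
  set K : Fin (n+1) := ⟨k, hk⟩ with hKdef
  set L' : Fin (n+1) := ⟨l', hl'lt⟩ with hLdef
  refine ⟨J, L', I, K, ?_⟩
  have hval : ∀ x : Fin (n + 1), ((rho n) x : ℕ) = if (x:ℕ) = n then 0 else (x:ℕ) + 1 := by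
    intro x
    show ((finRotate (n+1)) x : ℕ) = _
    rw [finRotate_succ_apply, Fin.val_add_one]
    simp only [Fin.ext_iff, Fin.val_last]
  have hs : ∀ x : Fin (n+1), ((Equiv.swap J L' * Equiv.swap I K) x : ℕ) =
      if (x:ℕ) = i then (if k = j then l' else k)
      else if (x:ℕ) = k then i
      else if (x:ℕ) = j then l'
      else if (x:ℕ) = l' then j
      else (x:ℕ) := by
    intro x
    rw [Equiv.Perm.mul_apply, swap_val, swap_val]
    rw [show (I:ℕ) = i from rfl, show (J:ℕ) = j from rfl,
        show (K:ℕ) = k from rfl, show (L':ℕ) = l' from rfl]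
    split_ifs <;> omega
  have hkey : ∀ y : Fin (n+1),
      (rho n) (β y) = (Equiv.swap J L' * Equiv.swap I K) (β ((rho n) y)) := by
    intro y
    by_cases hqn : (y:ℕ) = n
    · have hρ0 : ((rho n) y : ℕ) = 0 := by rw [hval, if_pos hqn]
      have hb2 : ((β ((rho n) y)):ℕ) = 0 := by
        rw [hA ((rho n) y) (by omega), hρ0]
      by_cases hl : l = n + 1
      · have hb1 : ((β y):ℕ) = i + ((y:ℕ) - (i + (l-k) + (k-j))) :=
          hD y (by omega) (by omega)
        refine Fin.ext ?_
        rw [hval, hs, hb1, hb2]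
        split_ifs <;> omega
      · have hb1 : ((β y):ℕ) = (y:ℕ) := by rw [hE y (by omega)]
        refine Fin.ext ?_
        rw [hval, hs, hb1, hb2]
        split_ifs <;> omega
    · have hρ : ((rho n) y : ℕ) = (y:ℕ) + 1 := by rw [hval, if_neg hqn]
      -- region analysis on (y:ℕ) + 1
      by_cases c1 : (y:ℕ) + 1 < i
      · have hb1 : ((β y):ℕ) = (y:ℕ) := by rw [hA y (by omega)]
        have hb2 : ((β ((rho n) y)):ℕ) = (y:ℕ) + 1 := by
          rw [hA ((rho n) y) (by omega), hρ]
        refine Fin.ext ?_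
        rw [hval, hs, hb1, hb2]
        split_ifs <;> omega
      by_cases c2 : (y:ℕ) + 1 = i
      · have hb1 : ((β y):ℕ) = (y:ℕ) := by rw [hA y (by omega)]
        have hb2 : ((β ((rho n) y)):ℕ) = k + (((rho n) y : ℕ) - i) :=
          hB ((rho n) y) (by omega) (by omega)
        rw [hρ] at hb2
        refine Fin.ext ?_
        rw [hval, hs, hb1, hb2]
        split_ifs <;> omega
      by_cases c3 : (y:ℕ) + 1 < i + (l - k)
      · have hb1 : ((β y):ℕ) = k + ((y:ℕ) - i) := hB y (by omega) (by omega)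
        have hb2 : ((β ((rho n) y)):ℕ) = k + (((rho n) y : ℕ) - i) :=
          hB ((rho n) y) (by omega) (by omega)
        rw [hρ] at hb2
        refine Fin.ext ?_
        rw [hval, hs, hb1, hb2]
        split_ifs <;> omega
      by_cases c4 : (y:ℕ) + 1 = i + (l - k)
      · have hb1 : ((β y):ℕ) = k + ((y:ℕ) - i) := hB y (by omega) (by omega)
        by_cases hjk' : j = k
        · have hb2 : ((β ((rho n) y)):ℕ) =
              i + (((rho n) y : ℕ) - (i + (l - k) + (k - j))) :=
            hD ((rho n) y) (by omega) (by omega)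
          rw [hρ] at hb2
          refine Fin.ext ?_
          rw [hval, hs, hb1, hb2]
          split_ifs <;> omega
        · have hb2 : ((β ((rho n) y)):ℕ) = j + (((rho n) y : ℕ) - (i + (l - k))) :=
            hC ((rho n) y) (by omega) (by omega)
          rw [hρ] at hb2
          refine Fin.ext ?_
          rw [hval, hs, hb1, hb2]
          split_ifs <;> omega
      by_cases c5 : (y:ℕ) + 1 < i + (l - k) + (k - j)
      · have hb1 : ((β y):ℕ) = j + ((y:ℕ) - (i + (l - k))) := hC y (by omega) (by omega)
        have hb2 : ((β ((rho n) y)):ℕ) = j + (((rho n) y : ℕ) - (i + (l - k))) :=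
          hC ((rho n) y) (by omega) (by omega)
        rw [hρ] at hb2
        refine Fin.ext ?_
        rw [hval, hs, hb1, hb2]
        split_ifs <;> omega
      by_cases c6 : (y:ℕ) + 1 = i + (l - k) + (k - j)
      · have hb1 : ((β y):ℕ) = j + ((y:ℕ) - (i + (l - k))) := hC y (by omega) (by omega)
        have hb2 : ((β ((rho n) y)):ℕ) =
            i + (((rho n) y : ℕ) - (i + (l - k) + (k - j))) :=
          hD ((rho n) y) (by omega) (by omega)
        rw [hρ] at hb2
        refine Fin.ext ?_
        rw [hval, hs, hb1, hb2]
        split_ifs <;> omega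
      by_cases c7 : (y:ℕ) + 1 < l
      · have hb1 : ((β y):ℕ) = i + ((y:ℕ) - (i + (l - k) + (k - j))) :=
          hD y (by omega) (by omega)
        have hb2 : ((β ((rho n) y)):ℕ) =
            i + (((rho n) y : ℕ) - (i + (l - k) + (k - j))) :=
          hD ((rho n) y) (by omega) (by omega)
        rw [hρ] at hb2
        refine Fin.ext ?_
        rw [hval, hs, hb1, hb2]
        split_ifs <;> omega
      by_cases c8 : (y:ℕ) + 1 = l
      · have hb1 : ((β y):ℕ) = i + ((y:ℕ) - (i + (l - k) + (k - j))) :=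
          hD y (by omega) (by omega)
        have hb2 : ((β ((rho n) y)):ℕ) = ((rho n) y : ℕ) := by
          rw [hE ((rho n) y) (by omega)]
        rw [hρ] at hb2
        refine Fin.ext ?_
        rw [hval, hs, hb1, hb2]
        split_ifs <;> omega
      · have hb1 : ((β y):ℕ) = (y:ℕ) := by rw [hE y (by omega)]
        have hb2 : ((β ((rho n) y)):ℕ) = ((rho n) y : ℕ) := by
          rw [hE ((rho n) y) (by omega)]
        rw [hρ] at hb2
        refine Fin.ext ?_
        rw [hval, hs, hb1, hb2]
        split_ifs <;> omega
  have hcomm : rho n * β = (Equiv.swap J L' * Equiv.swap I K) * (β * rho n) :=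
    Equiv.ext fun y => hkey y
  have hassoc : rho n * (β * (rho n)⁻¹ * β⁻¹) = (rho n * β) * (rho n)⁻¹ * β⁻¹ := by
    group
  show rho n * (β * (rho n)⁻¹ * β⁻¹) = _
  rw [hassoc, hcomm]
  group

lemma bi_swap_core (n : ℕ) (a b : Fin (n+1)) (h1 : 1 ≤ (a:ℕ)) (h2 : (a:ℕ) < (b:ℕ)) :
    IsBlockInterchangePerm n (Equiv.swap a b) := by
  have hne : ∀ (u v : Fin (n+1)), (u:ℕ) ≠ (v:ℕ) → u ≠ v :=
    fun u v h hh => h (congrArg Fin.val hh)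
  have hbn : (b:ℕ) < n + 1 := b.isLt
  refine ⟨(a:ℕ), (a:ℕ)+1, (b:ℕ), (b:ℕ)+1, h1, by omega, by omega, by omega, by omega,
    ?_, ?_, ?_, ?_, ?_⟩
  · intro p hp
    exact Equiv.swap_apply_of_ne_of_ne (hne p a (by omega)) (hne p b (by omega))
  · intro p hp1 hp2
    have hpa : p = a := Fin.ext (by omega)
    rw [hpa, Equiv.swap_apply_left]
    omega
  · intro p hp1 hp2
    rw [Equiv.swap_apply_of_ne_of_ne (hne p a (by omega)) (hne p b (by omega))]
    omega
  · intro p hp1 hp2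
    have hpb : p = b := Fin.ext (by omega)
    rw [hpb, Equiv.swap_apply_right]
    omega
  · intro p hp
    exact Equiv.swap_apply_of_ne_of_ne (hne p a (by omega)) (hne p b (by omega))

lemma isBlockInterchangePerm_swap (n : ℕ) (a b : Fin (n+1)) (hab : a ≠ b)
    (ha : a ≠ 0) (hb : b ≠ 0) : IsBlockInterchangePerm n (Equiv.swap a b) := by
  have ha' : (a:ℕ) ≠ 0 := fun h => ha (Fin.ext (by simpa using h))
  have hb' : (b:ℕ) ≠ 0 := fun h => hb (Fin.ext (by simpa using h))
  rcases Nat.lt_trichotomy (a:ℕ) (b:ℕ) with h | h | h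
  · exact bi_swap_core n a b (by omega) h
  · exact absurd (Fin.ext h) hab
  · rw [Equiv.swap_comm]
    exact bi_swap_core n b a (by omega) h

lemma exists_bi_list (n : ℕ) : ∀ N (π : Equiv.Perm (Fin (n+1))), π.support.card ≤ N →
    π 0 = 0 → ∃ L : List (Equiv.Perm (Fin (n+1))),
      (∀ g ∈ L, IsBlockInterchangePerm n g) ∧ L.prod = π := by
  intro N
  induction N with
  | zero =>
    intro π hcard hπ0
    have : π.support = ∅ := Finset.card_eq_zero.mp (Nat.le_zero.mp hcard)
    have : π = 1 := Equiv.Perm.support_eq_empty_iff.mp this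
    exact ⟨[], by simp, by simp [this]⟩
  | succ N ih =>
    intro π hcard hπ0
    by_cases hπ1 : π = 1
    · exact ⟨[], by simp, by simp [hπ1]⟩
    · have : ∃ a, π a ≠ a := by
        by_contra hc
        push_neg at hc
        exact hπ1 (Equiv.ext hc)
      obtain ⟨a, ha⟩ := this
      have ha0 : a ≠ 0 := fun h => ha (by rw [h, hπ0])
      have hb0 : π a ≠ 0 := by
        intro h
        exact ha0 (π.injective (by rw [h, hπ0]))
      have hab : a ≠ π a := fun h => ha h.symm
      set π' := Equiv.swap a (π a) * π with hπ'def
      have h0' : π' 0 = 0 := by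
        rw [hπ'def, Equiv.Perm.mul_apply, hπ0,
          Equiv.swap_apply_of_ne_of_ne (Ne.symm ha0) (Ne.symm hb0)]
      have hlt : π'.support.card < π.support.card := Equiv.Perm.card_support_swap_mul ha
      obtain ⟨L, hL, hLp⟩ := ih π' (by omega) h0'
      refine ⟨Equiv.swap a (π a) :: L, ?_, ?_⟩
      · intro g hg
        rcases List.mem_cons.mp hg with h | h
        · rw [h]
          exact isBlockInterchangePerm_swap n a (π a) hab ha0 hb0
        · exact hL g h
      · rw [List.prod_cons, hLp, hπ'def, ← mul_assoc, Equiv.swap_mul_self, one_mul]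

lemma list_bound (n : ℕ) (L : List (Equiv.Perm (Fin (n+1))))
    (hg : ∀ g ∈ L, IsBlockInterchangePerm n g) :
    n + 1 ≤ cycleCount (ob n L.prod) + 2 * L.length := by
  induction L using List.reverseRecOn with
  | nil =>
    simp only [List.prod_nil, List.length_nil, ob_one, cycleCount_one]
    omega
  | append_singleton L β ih =>
    have hβ := hg β (by simp)
    obtain ⟨i, j, k, l, hb⟩ := hβ
    obtain ⟨a, b, c, d, hob⟩ := ob_isBlockInterchange hb
    have hLp := ih (fun g hgm => hg g (by simp [hgm]))
    rw [List.prod_append, List.prod_singleton, List.length_append]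
    rw [ob_mul, hob, conj_swap_pair]
    have key := swap_pair_bound (ob n L.prod) (L.prod a) (L.prod b) (L.prod c) (L.prod d)
    simp only [List.length_singleton]
    omega


/-- for every permutation π of {1,…,n} (extended to {0,…,n} by fixing 0),
bid(π) ≥ (n + 1 − c(overline(π))) / 2. -/
theorem bid_lower_bound (n : ℕ) (π : Equiv.Perm (Fin (n + 1))) (hπ : π 0 = 0) :
    ((n : ℚ) + 1 - cycleCount (ob n π)) / 2 ≤ (bid n π : ℚ) := by
  obtain ⟨L₀, hL₀, hL₀p⟩ := exists_bi_list n π.support.card π le_rfl hπ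
  have hne : {t | ∃ L : List (Equiv.Perm (Fin (n + 1))), L.length = t ∧
      (∀ g ∈ L, IsBlockInterchangePerm n g) ∧ L.prod = π}.Nonempty :=
    ⟨L₀.length, L₀, rfl, hL₀, hL₀p⟩
  have hmem := Nat.sInf_mem hne
  obtain ⟨L, hlen, hbi, hprod⟩ := hmem
  have hbound := list_bound n L hbi
  rw [hprod] at hbound
  have hlen' : L.length = bid n π := hlen
  rw [hlen'] at hbound
  have hc : (n : ℚ) + 1 ≤ (cycleCount (ob n π) : ℚ) + 2 * (bid n π : ℚ) := by
    exact_mod_cast hbound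
  linarith
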